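/- Let α be a type and let (r_ℓ)_{ℓ ≥ 1} be a sequence of linear orders on α. For a finite subset X of α and a finite binary word w = (b_1, …, b_k) ∈ {0,1}^k, define the cell C_w(X) recursively by C_ε(X) = X (ε the empty word), C_{w·0}(X) = L_{r_{|w|+1}}(C_w(X)), and C_{w·1}(X) = R_{r_{|w|+1}}(C_w(X)), where L_r and R_r denote the median partition with respect to the linear order r. Let X⁺ ⊆ α with |X⁺| ≤ 1 and X⁺ ∩ X = ∅, let X⁻ ⊆ X with |X⁻| ≤ 1, and set X' = (X \ X⁻) ∪ X⁺. Then for every finite binary word w: |C_w(X) \ C_w(X')| ≤ 1 and |C_w(X') \ C_w(X)| ≤ 1; that is, every cell of the nested median partition of X' is obtained from the corresponding cell for X by deleting at most one point and inserting at most one point. -/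

import Mathlib

open Finset

/-- Median index `I(n) = ⌈n/2⌉`. -/
def medianIdx (n : ℕ) : ℕ := (n + 1) / 2

/-- 1-indexed rank of `x` in `X` with respect to the linear order `r`. -/
def rankIn {α : Type*} (r : LinearOrder α) (X : Finset α) (x : α) : ℕ :=
  letI := r
  (X.filter (fun y => y ≤ x)).card

/-- Left part of the median partition with respect to the linear order `r`. -/
def medLIn {α : Type*} (r : LinearOrder α) (X : Finset α) : Finset α :=
  X.filter (fun x => rankIn r X x < medianIdx X.card)

/-- Right part of the median partition with respect to the linear order `r`. -/
def medRIn {α : Type*} (r : LinearOrder α) (X : Finset α) : Finset α :=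
  X.filter (fun x => medianIdx X.card ≤ rankIn r X x)

/-- The cell of the nested median partition: `cell r ℓ w X` splits `X`
along the word `w` read left to right, using the linear order `r ℓ` at the
first split, `r (ℓ+1)` at the second, and so on.  The cell `C_w(X)` of the
paper is `cell r 1 w X`, where the bit `false` selects the left (below-median)
part and `true` selects the right part. -/
def cell {α : Type*} (r : ℕ → LinearOrder α) : ℕ → List Bool → Finset α → Finset α
  | _, [], X => X
  | ℓ, b :: w, X =>
      cell r (ℓ + 1) w (if b then medRIn (r ℓ) X else medLIn (r ℓ) X)

def dualOrd {α : Type*} (r : LinearOrder α) : LinearOrder α :=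
  letI := r; inferInstanceAs (LinearOrder αᵒᵈ)

def botIn {α : Type*} (r : LinearOrder α) (μ : ℕ → ℕ) (A : Finset α) : Finset α :=
  A.filter (fun x => rankIn r A x < μ A.card)

lemma rankIn_le_card {α : Type*} (r : LinearOrder α) (A : Finset α) (x : α) :
    rankIn r A x ≤ A.card := by
  letI := r; exact Finset.card_filter_le _ _

lemma one_le_rank {α : Type*} (r : LinearOrder α) {A : Finset α} {x : α} (hx : x ∈ A) :
    1 ≤ rankIn r A x := by
  letI := r
  have : x ∈ A.filter (fun y => y ≤ x) := by simp [hx]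
  exact Finset.card_pos.2 ⟨x, this⟩

lemma rank_add_rank_dual {α : Type*} (r : LinearOrder α) {A : Finset α} {x : α} (hx : x ∈ A) :
    rankIn r A x + rankIn (dualOrd r) A x = A.card + 1 := by
  letI := r
  have hdual : rankIn (dualOrd r) A x = (A.filter (fun y => x ≤ y)).card := rfl
  rw [hdual]
  unfold rankIn
  have hu : A.filter (fun y => y ≤ x) ∪ A.filter (fun y => x ≤ y) = A := by
    ext y
    simp only [Finset.mem_union, Finset.mem_filter]
    constructor
    · rintro (⟨h, _⟩ | ⟨h, _⟩) <;> exact h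
    · intro hy; rcases le_total y x with h | h
      · exact Or.inl ⟨hy, h⟩
      · exact Or.inr ⟨hy, h⟩
  have hi : A.filter (fun y => y ≤ x) ∩ A.filter (fun y => x ≤ y) = {x} := by
    ext y
    simp only [Finset.mem_inter, Finset.mem_filter, Finset.mem_singleton]
    constructor
    · rintro ⟨⟨_, h1⟩, ⟨_, h2⟩⟩; exact le_antisymm h1 h2
    · rintro rfl; exact ⟨⟨hx, le_refl _⟩, ⟨hx, le_refl _⟩⟩
  have := Finset.card_union_add_card_inter (A.filter (fun y => y ≤ x)) (A.filter (fun y => x ≤ y))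
  rw [hu, hi] at this
  simp at this
  omega

lemma rank_orderIso {α : Type*} (r : LinearOrder α) (A : Finset α) (i : Fin A.card) :
    rankIn r A (A.orderIsoOfFin rfl i) = i + 1 := by
  letI := r
  unfold rankIn
  have h : A.filter (fun y => y ≤ (A.orderIsoOfFin rfl i : α))
      = (Finset.Iic i).image (fun j => (A.orderIsoOfFin rfl j : α)) := by
    ext y
    simp only [mem_filter, mem_image, mem_Iic]
    constructor
    · rintro ⟨hy, hle⟩
      refine ⟨(A.orderIsoOfFin rfl).symm ⟨y, hy⟩, ?_, by simp⟩
      rw [← (A.orderIsoOfFin rfl).le_iff_le]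
      rw [OrderIso.apply_symm_apply]
      exact hle
    · rintro ⟨j, hj, rfl⟩
      exact ⟨(A.orderIsoOfFin rfl j).2, by simpa using (A.orderIsoOfFin rfl).le_iff_le.2 hj⟩
  rw [h, Finset.card_image_of_injective _ (fun a b hab => (A.orderIsoOfFin rfl).injective (Subtype.ext hab)), Fin.card_Iic]

lemma card_rank_lt {α : Type*} (r : LinearOrder α) (A : Finset α) (m : ℕ) :
    (A.filter fun x => rankIn r A x < m).card = min A.card (m - 1) := by
  letI := r
  classical
  have h : A.filter (fun x => rankIn r A x < m)
      = (Finset.univ.filter (fun i : Fin A.card => (i : ℕ) < m - 1)).image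
          (fun j => (A.orderIsoOfFin rfl j : α)) := by
    ext y
    simp only [mem_filter, mem_image, mem_univ, true_and]
    constructor
    · rintro ⟨hy, hlt⟩
      refine ⟨(A.orderIsoOfFin rfl).symm ⟨y, hy⟩, ?_, by simp⟩
      have := rank_orderIso r A ((A.orderIsoOfFin rfl).symm ⟨y, hy⟩)
      simp only [OrderIso.apply_symm_apply] at this
      omega
    · rintro ⟨j, hj, rfl⟩
      refine ⟨(A.orderIsoOfFin rfl j).2, ?_⟩
      rw [rank_orderIso]
      omega
  rw [h, Finset.card_image_of_injective _ (fun a b hab => (A.orderIsoOfFin rfl).injective (Subtype.ext hab))]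
  rw [Finset.card_filter, Fin.sum_univ_eq_sum_range (fun x => if x < m - 1 then 1 else 0),
    ← Finset.card_filter]
  rw [show ((Finset.range A.card).filter (fun x => x < m - 1)) = Finset.range (min A.card (m-1)) by
    ext a; simp only [mem_filter, mem_range]; omega]
  simp

lemma bot_stable {α : Type*} [DecidableEq α] (r : LinearOrder α) (μ : ℕ → ℕ)
    (hmono : ∀ {a b : ℕ}, a ≤ b → μ a ≤ μ b) (hlip : ∀ n, μ (n + 1) ≤ μ n + 1)
    (hub : ∀ n, 1 ≤ n → μ n ≤ n + 1)
    (A B : Finset α) (hAB : (A \ B).card ≤ 1) (hBA : (B \ A).card ≤ 1) :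
    (botIn r μ A \ botIn r μ B).card ≤ 1 := by
  have hcardA : (botIn r μ A).card = min A.card (μ A.card - 1) := card_rank_lt r A _
  by_cases htriv : min A.card (μ A.card - 1) ≤ 1
  · exact le_trans (Finset.card_le_card (Finset.sdiff_subset)) (by omega)
  push_neg at htriv
  have hA1 : 2 ≤ A.card := le_trans htriv (min_le_left _ _)
  have hk2 : 2 ≤ μ A.card - 1 := le_trans htriv (min_le_right _ _)
  set kA := μ A.card - 1 with hkA
  set C := A ∩ B with hC
  have hCA : C ⊆ A := Finset.inter_subset_left
  have hCB : C ⊆ B := Finset.inter_subset_right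
  have hCcard : A.card ≤ C.card + 1 := by
    have h1 : A \ C = A \ B := by rw [hC, Finset.sdiff_inter_self_left]
    have h2 : (A \ B).card = A.card - C.card := h1 ▸ Finset.card_sdiff_of_subset hCA
    have h3 : C.card ≤ A.card := Finset.card_le_card hCA
    omega
  have hkub : kA ≤ A.card := by
    have := hub A.card (by omega)
    omega
  set S := C.filter (fun x => rankIn r C x < kA) with hS
  have hScard : S.card = kA - 1 := by
    rw [hS, card_rank_lt]
    omega
  have hrank_sub : ∀ (D E : Finset α), (D \ E).card ≤ 1 → ∀ x, rankIn r D x ≤ rankIn r (D ∩ E) x + 1 := by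
    intro D E hDE x
    letI := r
    have hsub : D ⊆ (D ∩ E) ∪ (D \ E) := by
      intro y hy
      simp only [Finset.mem_union, Finset.mem_inter, Finset.mem_sdiff]
      by_cases hyE : y ∈ E
      · exact Or.inl ⟨hy, hyE⟩
      · exact Or.inr ⟨hy, hyE⟩
    calc (D.filter (fun y => y ≤ x)).card
        ≤ (((D ∩ E) ∪ (D \ E)).filter (fun y => y ≤ x)).card :=
          Finset.card_le_card (Finset.filter_subset_filter _ hsub)
      _ = ((D ∩ E).filter (fun y => y ≤ x) ∪ (D \ E).filter (fun y => y ≤ x)).card := by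
          rw [Finset.filter_union]
      _ ≤ ((D ∩ E).filter (fun y => y ≤ x)).card + ((D \ E).filter (fun y => y ≤ x)).card :=
          Finset.card_union_le _ _
      _ ≤ rankIn r (D ∩ E) x + 1 :=
          add_le_add le_rfl (le_trans (Finset.card_filter_le _ _) hDE)
  have hrankA : ∀ x ∈ C, rankIn r A x ≤ rankIn r C x + 1 := fun x _ => by
    have := hrank_sub A B hAB x
    rwa [← hC] at this
  have hrankB : ∀ x ∈ C, rankIn r B x ≤ rankIn r C x + 1 := fun x _ => by
    have := hrank_sub B A hBA x
    rwa [show B ∩ A = C by rw [hC, Finset.inter_comm]] at this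
  have hSA : S ⊆ botIn r μ A := by
    intro x hx
    rw [hS, Finset.mem_filter] at hx
    obtain ⟨hxC, hxr⟩ := hx
    rw [botIn, Finset.mem_filter]
    refine ⟨hCA hxC, ?_⟩
    have := hrankA x hxC
    omega
  have hSB : S ⊆ botIn r μ B := by
    intro x hx
    rw [hS, Finset.mem_filter] at hx
    obtain ⟨hxC, hxr⟩ := hx
    rw [botIn, Finset.mem_filter]
    refine ⟨hCB hxC, ?_⟩
    by_cases hmu : μ A.card ≤ μ B.card
    · have := hrankB x hxC
      omega
    · push_neg at hmu
      have hcard : B.card < A.card := by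
        by_contra hcon
        push_neg at hcon
        exact absurd (hmono hcon) (by omega)
      have hBC : C = B := by
        apply Finset.eq_of_subset_of_card_le hCB
        have := Finset.card_le_card hCB
        omega
      have hBn : B.card = A.card - 1 := by
        have := Finset.card_le_card hCB
        rw [← hBC]
        omega
      have hlipA : μ A.card ≤ μ (A.card - 1) + 1 := by
        have := hlip (A.card - 1)
        rwa [show A.card - 1 + 1 = A.card by omega] at this
      have hrB : rankIn r B x = rankIn r C x := by rw [hBC]
      rw [hBn] at *
      omega
  have hinter : S ⊆ botIn r μ A ∩ botIn r μ B := Finset.subset_inter hSA hSB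
  have h1 : (botIn r μ A ∩ botIn r μ B).card + (botIn r μ A \ botIn r μ B).card
      = (botIn r μ A).card := Finset.card_inter_add_card_sdiff _ _
  have h2 : S.card ≤ (botIn r μ A ∩ botIn r μ B).card := Finset.card_le_card hinter
  omega

lemma medR_eq_bot {α : Type*} (r : LinearOrder α) (A : Finset α) :
    medRIn r A = botIn (dualOrd r) (fun n => n + 2 - medianIdx n) A := by
  ext x
  simp only [medRIn, botIn, Finset.mem_filter, and_congr_right_iff]
  intro hx
  have h1 := rank_add_rank_dual r hx
  have h2 := one_le_rank r hx
  have h3 := rankIn_le_card r A x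
  unfold medianIdx
  omega

lemma medL_stable {α : Type*} [DecidableEq α] (r : LinearOrder α) (A B : Finset α)
    (hAB : (A \ B).card ≤ 1) (hBA : (B \ A).card ≤ 1) :
    (medLIn r A \ medLIn r B).card ≤ 1 :=
  bot_stable r medianIdx (fun {a b} h => by unfold medianIdx; omega)
    (fun n => by unfold medianIdx; omega) (fun n h => by unfold medianIdx; omega) A B hAB hBA

lemma medR_stable {α : Type*} [DecidableEq α] (r : LinearOrder α) (A B : Finset α)
    (hAB : (A \ B).card ≤ 1) (hBA : (B \ A).card ≤ 1) :
    (medRIn r A \ medRIn r B).card ≤ 1 := by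
  rw [medR_eq_bot, medR_eq_bot]
  exact bot_stable (dualOrd r) _ (fun {a b} h => by unfold medianIdx; omega)
    (fun n => by unfold medianIdx; omega) (fun n h => by unfold medianIdx; omega) A B hAB hBA

theorem kd_tree_stability {α : Type*} [DecidableEq α]
    (r : ℕ → LinearOrder α)
    (X Xp Xm : Finset α)
    (hpcard : Xp.card ≤ 1) (hpdisj : Xp ∩ X = ∅)
    (hmsub : Xm ⊆ X) (hmcard : Xm.card ≤ 1)
    (X' : Finset α) (hX' : X' = (X \ Xm) ∪ Xp) :
    ∀ w : List Bool,
      (cell r 1 w X \ cell r 1 w X').card ≤ 1 ∧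
      (cell r 1 w X' \ cell r 1 w X).card ≤ 1 := by
  have H : ∀ (w : List Bool) (ℓ : ℕ) (A B : Finset α), (A \ B).card ≤ 1 → (B \ A).card ≤ 1 →
      (cell r ℓ w A \ cell r ℓ w B).card ≤ 1 ∧ (cell r ℓ w B \ cell r ℓ w A).card ≤ 1 := by
    intro w
    induction w with
    | nil => exact fun ℓ A B h1 h2 => ⟨h1, h2⟩
    | cons b t ih =>
      intro ℓ A B h1 h2
      cases b
      · exact ih (ℓ + 1) (medLIn (r ℓ) A) (medLIn (r ℓ) B)
          (medL_stable _ _ _ h1 h2) (medL_stable _ _ _ h2 h1)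
      · exact ih (ℓ + 1) (medRIn (r ℓ) A) (medRIn (r ℓ) B)
          (medR_stable _ _ _ h1 h2) (medR_stable _ _ _ h2 h1)
  intro w
  apply H
  · refine le_trans (Finset.card_le_card (show X \ X' ⊆ Xm from ?_)) hmcard
    subst hX'
    intro x hx
    simp only [Finset.mem_sdiff, Finset.mem_union] at hx
    by_contra hxm
    exact hx.2 (Or.inl ⟨hx.1, hxm⟩)
  · refine le_trans (Finset.card_le_card (show X' \ X ⊆ Xp from ?_)) hpcard
    subst hX'
    intro x hx
    simp only [Finset.mem_sdiff, Finset.mem_union, Finset.mem_sdiff] at hx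
    rcases hx.1 with ⟨hxX, _⟩ | hxp
    · exact absurd hxX hx.2
    · exact hxp
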